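/- In a group, assume elements t_i (i ∈ ℤ) and s satisfy t_i t_{i-1} = t_j t_{j-1} for all i, j, and additionally s t_0 s = t_0 s t_0, s t_1 s = t_1 s t_1, and s (t_1 t_0) s (t_1 t_0) = (t_1 t_0) s (t_1 t_0) s. Then s t_i s = t_i s t_i holds for all i ∈ ℤ. -/

import Mathlib

private lemma braid_up {G : Type*} [Group G] (a b s : G)
    (ha : s * a * s = a * s * a) (hb : s * b * s = b * s * b)
    (hp : s * (a * b) * s * (a * b) = (a * b) * s * (a * b) * s) :
    s * (a * b * a⁻¹) * s = (a * b * a⁻¹) * s * (a * b * a⁻¹) := by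
  calc s * (a * b * a⁻¹) * s
      = s * a * b * a⁻¹ * (s * a * s) * s⁻¹ * a⁻¹ := by group
    _ = s * a * b * a⁻¹ * (a * s * a) * s⁻¹ * a⁻¹ := by rw [ha]
    _ = (s * (a * b) * s * (a * b)) * b⁻¹ * a⁻¹ * a * s⁻¹ * a⁻¹ := by group
    _ = ((a * b) * s * (a * b) * s) * b⁻¹ * a⁻¹ * a * s⁻¹ * a⁻¹ := by rw [hp]
    _ = a * b * s * a * s⁻¹ * (s * b * s) * b⁻¹ * s⁻¹ * a⁻¹ := by group
    _ = a * b * s * a * s⁻¹ * (b * s * b) * b⁻¹ * s⁻¹ * a⁻¹ := by rw [hb]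
    _ = a * b * a⁻¹ * (a * s * a) * s⁻¹ * b * a⁻¹ := by group
    _ = a * b * a⁻¹ * (s * a * s) * s⁻¹ * b * a⁻¹ := by rw [← ha]
    _ = (a * b * a⁻¹) * s * (a * b * a⁻¹) := by group

private lemma braid_down {G : Type*} [Group G] (a b s : G)
    (ha : s * a * s = a * s * a) (hb : s * b * s = b * s * b)
    (hp : s * (a * b) * s * (a * b) = (a * b) * s * (a * b) * s) :
    s * (b⁻¹ * a * b) * s = (b⁻¹ * a * b) * s * (b⁻¹ * a * b) := by
  calc s * (b⁻¹ * a * b) * s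
      = b⁻¹ * s⁻¹ * (s * b * s) * b⁻¹ * a * b * s := by group
    _ = b⁻¹ * s⁻¹ * (b * s * b) * b⁻¹ * a * b * s := by rw [hb]
    _ = b⁻¹ * s⁻¹ * b * b⁻¹ * a⁻¹ * ((a * b) * s * (a * b) * s) := by group
    _ = b⁻¹ * s⁻¹ * b * b⁻¹ * a⁻¹ * (s * (a * b) * s * (a * b)) := by rw [← hp]
    _ = b⁻¹ * s⁻¹ * a⁻¹ * (s * a * s) * s⁻¹ * b * s * a * b := by group
    _ = b⁻¹ * s⁻¹ * a⁻¹ * (a * s * a) * s⁻¹ * b * s * a * b := by rw [ha]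
    _ = b⁻¹ * a * s⁻¹ * (b * s * b) * b⁻¹ * a * b := by group
    _ = b⁻¹ * a * s⁻¹ * (s * b * s) * b⁻¹ * a * b := by rw [← hb]
    _ = (b⁻¹ * a * b) * s * (b⁻¹ * a * b) := by group

/-- If elements `t i` (`i ∈ ℤ`) and `s` of a group satisfy (Q1), (P2) for `i = 0, 1`
and (P4), then `s * t i * s = t i * s * t i` holds for all `i ∈ ℤ`. -/
theorem stmt1 {G : Type*} [Group G] (t : ℤ → G) (s : G)
    (hQ1 : ∀ i j : ℤ, t i * t (i - 1) = t j * t (j - 1))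
    (hP2_0 : s * t 0 * s = t 0 * s * t 0)
    (hP2_1 : s * t 1 * s = t 1 * s * t 1)
    (hP4 : s * (t 1 * t 0) * s * (t 1 * t 0) = (t 1 * t 0) * s * (t 1 * t 0) * s) :
    ∀ i : ℤ, s * t i * s = t i * s * t i := by
  have hu : ∀ i : ℤ, t (i + 1) * t i = t 1 * t 0 := by
    intro i
    have h := hQ1 (i + 1) 1
    norm_num at h
    exact h
  have key : ∀ i : ℤ, (s * t i * s = t i * s * t i) ∧
      (s * t (i + 1) * s = t (i + 1) * s * t (i + 1)) := by
    intro i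
    induction i using Int.induction_on with
    | zero =>
      constructor
      · exact hP2_0
      · rw [zero_add]; exact hP2_1
    | succ i ih =>
      refine ⟨ih.2, ?_⟩
      have h2 : t ((i : ℤ) + 1 + 1) = t ((i : ℤ) + 1) * t i * (t ((i : ℤ) + 1))⁻¹ := by
        rw [eq_mul_inv_iff_mul_eq, hu ((i : ℤ) + 1), hu i]
      rw [h2]
      exact braid_up (t ((i : ℤ) + 1)) (t i) s ih.2 ih.1
        (by rw [hu i]; exact hP4)
    | pred i ih =>
      have h2 : t (-(i : ℤ) - 1) = (t (-(i : ℤ)))⁻¹ * t (-(i : ℤ) + 1) * t (-(i : ℤ)) := by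
        have h3 : t (-(i : ℤ) - 1 + 1) * t (-(i : ℤ) - 1) = t 1 * t 0 := hu _
        have h4 : (-(i : ℤ) - 1 + 1) = -(i : ℤ) := by ring
        rw [h4] at h3
        rw [eq_comm, mul_assoc, inv_mul_eq_iff_eq_mul, hu (-(i : ℤ)), h3]
      have h5 : (-(i : ℤ) - 1 + 1) = -(i : ℤ) := by ring
      refine ⟨?_, ?_⟩
      · rw [h2]
        exact braid_down (t (-(i : ℤ) + 1)) (t (-(i : ℤ))) s ih.2 ih.1
          (by rw [hu (-(i : ℤ))]; exact hP4)
      · rw [h5]; exact ih.1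
  intro i
  exact (key i).1
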